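/- For every m×n matrix A with entries in {0,1}, the longest increasing path length admits the column decomposition L(A) = max{ Σ_{j=1}^{n} (S^j_{k_j} − S^j_{k_{j−1}}) : 0 = k_0 ≤ k_1 ≤ ⋯ ≤ k_{n−1} ≤ k_n = m }, where S^j_k = Σ_{i=1}^{k} A_{i,j} is the number of 1's in column j among the first k rows. -/

import Mathlib

open scoped Classical

/-- `L(A)`: the maximal length of an increasing path in a 0-1 matrix `A`. -/
noncomputable def pathLen {m n : ℕ} (A : Fin m × Fin n → Bool) : ℕ :=
  sSup {k | ∃ f : Fin k → Fin m × Fin n,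
    (∀ i, A (f i) = true) ∧
    ∀ i j : Fin k, i < j → (f i).1 < (f j).1 ∧ (f i).2 ≤ (f j).2}

/-- `S^j_k`: the number of 1's in column `j` among the first `k` rows of `A`. -/
def colCount {m n : ℕ} (A : Fin m × Fin n → Bool) (j : Fin n) (k : ℕ) : ℕ :=
  (Finset.univ.filter fun i : Fin m => (i : ℕ) < k ∧ A (i, j) = true).card

lemma colCount_diff {m n : ℕ} (A : Fin m × Fin n → Bool) (j : Fin n) {a b : ℕ} (hab : a ≤ b) :
    colCount A j b - colCount A j a
      = (Finset.univ.filter fun i : Fin m => a ≤ (i:ℕ) ∧ (i:ℕ) < b ∧ A (i, j) = true).card := by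
  have hsplit : (Finset.univ.filter fun i : Fin m => (i:ℕ) < b ∧ A (i, j) = true)
      = (Finset.univ.filter fun i : Fin m => (i:ℕ) < a ∧ A (i, j) = true)
        ∪ (Finset.univ.filter fun i : Fin m => a ≤ (i:ℕ) ∧ (i:ℕ) < b ∧ A (i, j) = true) := by
    ext i
    simp only [Finset.mem_filter, Finset.mem_union, Finset.mem_univ, true_and]
    constructor
    · rintro ⟨hb, hA⟩
      rcases lt_or_ge (i:ℕ) a with h | h
      · exact Or.inl ⟨h, hA⟩
      · exact Or.inr ⟨h, hb, hA⟩
    · rintro (⟨h, hA⟩ | ⟨_, hb, hA⟩)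
      · exact ⟨lt_of_lt_of_le h hab, hA⟩
      · exact ⟨hb, hA⟩
  have hdisj : Disjoint
      (Finset.univ.filter fun i : Fin m => (i:ℕ) < a ∧ A (i, j) = true)
      (Finset.univ.filter fun i : Fin m => a ≤ (i:ℕ) ∧ (i:ℕ) < b ∧ A (i, j) = true) := by
    rw [Finset.disjoint_left]
    intro i h1 h2
    simp only [Finset.mem_filter] at h1 h2
    omega
  unfold colCount
  rw [hsplit, Finset.card_union_of_disjoint hdisj]
  omega

/-- Column decomposition of the longest increasing path:
`L(A) = max{Σ_j (S^j_{k_j} − S^j_{k_{j−1}}) : 0 = k_0 ≤ k_1 ≤ ⋯ ≤ k_n = m}`. -/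
theorem pathLen_eq_column_decomposition {m n : ℕ} (A : Fin m × Fin n → Bool) :
    pathLen A =
      sSup {v | ∃ k : Fin (n + 1) → ℕ, Monotone k ∧ k 0 = 0 ∧ k (Fin.last n) = m ∧
        v = ∑ j : Fin n, (colCount A j (k j.succ) - colCount A j (k j.castSucc))} := by
  classical
  have hbddL : BddAbove {k | ∃ f : Fin k → Fin m × Fin n,
      (∀ i, A (f i) = true) ∧
      ∀ i j : Fin k, i < j → (f i).1 < (f j).1 ∧ (f i).2 ≤ (f j).2} := by
    refine ⟨m, ?_⟩
    rintro c ⟨f, _, hmono⟩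
    have hinj : Function.Injective (fun i => (f i).1) := by
      intro a b hab
      by_contra hne
      rcases lt_or_gt_of_ne hne with h | h
      · exact absurd hab (ne_of_lt (hmono a b h).1)
      · exact absurd hab.symm (ne_of_lt (hmono b a h).1)
    simpa using Fintype.card_le_of_injective _ hinj
  have hbddR : BddAbove {v | ∃ k : Fin (n + 1) → ℕ, Monotone k ∧ k 0 = 0 ∧ k (Fin.last n) = m ∧
      v = ∑ j : Fin n, (colCount A j (k j.succ) - colCount A j (k j.castSucc))} := by
    refine ⟨n * m, ?_⟩
    rintro v ⟨k, _, _, _, rfl⟩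
    calc ∑ j : Fin n, (colCount A j (k j.succ) - colCount A j (k j.castSucc))
        ≤ ∑ _j : Fin n, m := by
          refine Finset.sum_le_sum fun j _ => ?_
          have : colCount A j (k j.succ) ≤ m := by
            unfold colCount
            simpa using (Finset.card_filter_le Finset.univ
              fun i : Fin m => (i : ℕ) < k j.succ ∧ A (i, j) = true)
          omega
      _ = n * m := by simp [Finset.sum_const, mul_comm]
  apply le_antisymm
  · -- pathLen ≤ sSup RHS
    apply csSup_le'
    rintro c ⟨f, hA, hmono⟩
    rcases Nat.eq_zero_or_pos c with rfl | hc
    · exact Nat.zero_le _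
    have hn : 0 < n := (f ⟨0, hc⟩).2.pos
    -- construct cut points
    set K : Fin (n + 1) → ℕ := fun t =>
      if (t : ℕ) = n then m
      else (Finset.univ.filter fun i : Fin c => ((f i).2 : ℕ) < (t : ℕ)).sup
        fun i => (f i).1 + 1 with hK
    have hKle : ∀ t, K t ≤ m := by
      intro t
      by_cases ht : (t : ℕ) = n
      · simp [hK, ht]
      · simp only [hK, ht, if_false]
        exact Finset.sup_le fun i _ => (f i).1.2
    have hKmono : Monotone K := by
      intro t t' htt'
      by_cases ht' : (t' : ℕ) = n
      · simpa [hK, ht'] using hKle t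
      · have ht : (t : ℕ) ≠ n := by
          have := Fin.le_def.mp htt'
          have := t.is_le; have := t'.is_le; omega
        simp only [hK, ht, ht', if_false]
        apply Finset.sup_mono
        intro i hi
        simp only [Finset.mem_filter, Finset.mem_univ, true_and] at hi ⊢
        exact lt_of_lt_of_le hi (Fin.le_def.mp htt')
    have hK0 : K 0 = 0 := by
      have : ((0 : Fin (n + 1)) : ℕ) ≠ n := by simp; omega
      simp only [hK, this, if_false]
      simp
    have hKlast : K (Fin.last n) = m := by simp [hK]
    -- key bounds for each path element
    have hlow : ∀ i : Fin c, K ((f i).2.castSucc) ≤ (f i).1 := by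
      intro i
      have hcs : (((f i).2.castSucc : Fin (n+1)) : ℕ) ≠ n := by
        simpa using (f i).2.2.ne
      simp only [hK, hcs, if_false]
      apply Finset.sup_le
      intro i' hi'
      simp only [Finset.mem_filter, Finset.mem_univ, true_and, Fin.coe_castSucc] at hi'
      rcases lt_trichotomy i' i with h | rfl | h
      · exact (hmono i' i h).1
      · omega
      · exact absurd (Fin.lt_def.mp (lt_of_le_of_lt (hmono i i' h).2 hi'))
          (by omega)
    have hhigh : ∀ i : Fin c, ((f i).1 : ℕ) < K ((f i).2.succ) := by
      intro i
      by_cases hs : (((f i).2.succ : Fin (n+1)) : ℕ) = n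
      · simp only [hK, hs, if_true]
        exact (f i).1.2
      · simp only [hK, hs, if_false]
        have : i ∈ Finset.univ.filter fun i' : Fin c =>
            ((f i').2 : ℕ) < (((f i).2.succ : Fin (n+1)) : ℕ) := by
          simp [Fin.val_succ]
        calc ((f i).1 : ℕ) < (f i).1 + 1 := Nat.lt_succ_self _
          _ ≤ _ := Finset.le_sup (f := fun i' => ((f i').1 : ℕ) + 1) this
    -- bound c by the sum
    have hveq : c ≤ ∑ j : Fin n, (colCount A j (K j.succ) - colCount A j (K j.castSucc)) := by
      have hc' : c = ∑ j : Fin n,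
          (Finset.univ.filter fun i : Fin c => (f i).2 = j).card := by
        have := Finset.card_eq_sum_card_fiberwise
          (f := fun i : Fin c => (f i).2) (s := Finset.univ) (t := Finset.univ)
          (fun i _ => Finset.mem_univ _)
        simpa using this
      rw [hc']
      refine Finset.sum_le_sum fun j _ => ?_
      rw [colCount_diff A j (hKmono (j.castSucc_le_succ))]
      apply Finset.card_le_card_of_injOn (fun i => (f i).1)
      · intro i hi
        simp only [Finset.mem_coe, Finset.mem_filter, Finset.mem_univ, true_and] at hi ⊢
        refine ⟨?_, ?_, ?_⟩
        · rw [← hi]; exact hlow i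
        · rw [← hi]; exact hhigh i
        · have : ((f i).1, j) = f i := by rw [← hi]
          rw [this]; exact hA i
      · intro a _ b _ hab
        by_contra hne
        rcases lt_or_gt_of_ne hne with h | h
        · exact absurd hab (ne_of_lt (hmono a b h).1)
        · exact absurd hab.symm (ne_of_lt (hmono b a h).1)
    calc c ≤ ∑ j : Fin n, (colCount A j (K j.succ) - colCount A j (K j.castSucc)) := hveq
      _ ≤ _ := le_csSup hbddR ⟨K, hKmono, hK0, hKlast, rfl⟩
  · -- sSup RHS ≤ pathLen
    apply csSup_le'
    rintro v ⟨k, hkmono, hk0, hklast, rfl⟩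
    rcases Nat.eq_zero_or_pos n with rfl | hn
    · simp
    rcases Nat.eq_zero_or_pos m with rfl | hm
    · have hz : ∀ (j : Fin n) (t : ℕ), colCount A j t = 0 := by
        intro j t; simp [colCount]
      simp [hz]
    -- main case : assign to each row the column of the interval containing it
    have hJne : ∀ i : Fin m,
        (Finset.univ.filter fun j : Fin n => k j.castSucc ≤ (i:ℕ)).Nonempty := by
      intro i
      refine ⟨⟨0, hn⟩, ?_⟩
      simp only [Finset.mem_filter, Finset.mem_univ, true_and]
      have h0 : ((⟨0, hn⟩ : Fin n).castSucc) = (0 : Fin (n+1)) := by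
        ext; simp
      rw [h0, hk0]
      exact Nat.zero_le _
    set g : Fin m → Fin n := fun i =>
      (Finset.univ.filter fun j : Fin n => k j.castSucc ≤ (i:ℕ)).max' (hJne i) with hg
    have hglow : ∀ i : Fin m, k (g i).castSucc ≤ (i:ℕ) := by
      intro i
      have := Finset.max'_mem _ (hJne i)
      simpa using (Finset.mem_filter.mp this).2
    have hghigh : ∀ i : Fin m, (i:ℕ) < k (g i).succ := by
      intro i
      by_cases hs : ((g i : ℕ) + 1) = n
      · have hlast : (g i).succ = Fin.last n := by
          ext; simp [hs]
        rw [hlast, hklast]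
        exact i.2
      · have hlt : (g i : ℕ) + 1 < n := lt_of_le_of_ne (g i).2 hs
        by_contra hcon
        push_neg at hcon
        have hmem : (⟨(g i : ℕ) + 1, hlt⟩ : Fin n) ∈
            Finset.univ.filter fun j : Fin n => k j.castSucc ≤ (i:ℕ) := by
          simp only [Finset.mem_filter, Finset.mem_univ, true_and]
          have : (⟨(g i : ℕ) + 1, hlt⟩ : Fin n).castSucc = (g i).succ := by
            ext; simp
          rw [this]
          exact hcon
        have := Finset.le_max' _ _ hmem
        have := Fin.le_def.mp this
        simp at this; exact lt_irrefl _ this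
    have hgmono : ∀ i i' : Fin m, i ≤ i' → g i ≤ g i' := by
      intro i i' h
      apply Finset.le_max'
      simp only [Finset.mem_filter, Finset.mem_univ, true_and]
      exact le_trans (hglow i) (by exact_mod_cast h)
    have hguniq : ∀ (i : Fin m) (j : Fin n),
        k j.castSucc ≤ (i:ℕ) → (i:ℕ) < k j.succ → g i = j := by
      intro i j h1 h2
      have hj_le : j ≤ g i := by
        apply Finset.le_max'
        simp only [Finset.mem_filter, Finset.mem_univ, true_and]
        exact h1
      rcases eq_or_lt_of_le hj_le with h | h
      · exact h.symm
      · exfalso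
        have hle : j.succ ≤ (g i).castSucc := by
          rw [Fin.le_def]
          simp only [Fin.val_succ, Fin.coe_castSucc]
          exact Fin.lt_def.mp h
        have := le_trans (hkmono hle) (hglow i)
        omega
    set R : Finset (Fin m) := Finset.univ.filter fun i => A (i, g i) = true with hRdef
    have hmemL : R.card ∈ {c | ∃ f : Fin c → Fin m × Fin n,
        (∀ i, A (f i) = true) ∧
        ∀ i j : Fin c, i < j → (f i).1 < (f j).1 ∧ (f i).2 ≤ (f j).2} := by
      set e := R.orderIsoOfFin rfl with he
      refine ⟨fun i => ((e i : Fin m), g (e i)), ?_, ?_⟩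
      · intro i
        have h2 : (e i : Fin m) ∈
            Finset.univ.filter fun i => A (i, g i) = true := (e i).2
        exact (Finset.mem_filter.mp h2).2
      · intro i i' h
        have hlt : (e i : Fin m) < (e i' : Fin m) :=
          Subtype.coe_lt_coe.mpr (e.strictMono h)
        exact ⟨hlt, hgmono _ _ (le_of_lt hlt)⟩
    have hv : ∑ j : Fin n, (colCount A j (k j.succ) - colCount A j (k j.castSucc))
        ≤ R.card := by
      have hR : R.card = ∑ j : Fin n, (R.filter fun i => g i = j).card :=
        Finset.card_eq_sum_card_fiberwise (fun i _ => Finset.mem_univ _)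
      rw [hR]
      refine Finset.sum_le_sum fun j _ => ?_
      rw [colCount_diff A j (hkmono j.castSucc_le_succ)]
      apply Finset.card_le_card
      intro i hi
      simp only [Finset.mem_filter, Finset.mem_univ, true_and] at hi
      obtain ⟨h1, h2, h3⟩ := hi
      have hgj := hguniq i j h1 h2
      have : i ∈ (Finset.univ.filter fun i => A (i, g i) = true).filter
          fun i => g i = j :=
        Finset.mem_filter.mpr ⟨Finset.mem_filter.mpr ⟨Finset.mem_univ _,
          by rw [hgj]; exact h3⟩, hgj⟩
      exact this
    exact le_trans hv (le_csSup hbddL hmemL)
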